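/- Let k be a field of characteristic zero, q ∈ k \ {0,1}, a = ∑ α_i h^i ∈ k[h] monic of degree N > 1, and l = σ(a) − a where σ(h) = qh. In the Smith algebra B generated by Y, H, X with relations HY = qYH, [X,Y] = l(H), XH = qHX, the element Ω = YX − a(H) is central and satisfies Ω = XY − a(qH). -/
import Mathlib


open Polynomial

/-- Generators: `ι 0 = Y`, `ι 1 = H`, `ι 2 = X`. Defining relations of the
Smith algebra `B_l` with `l(H) = a(qH) − a(H)`:
`HY = q·YH`, `XY − YX = l(H)`, `XH = q·HX`. -/
inductive smithRel (k : Type*) [CommRing k] (q : k) (a : Polynomial k) :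
    FreeAlgebra k (Fin 3) → FreeAlgebra k (Fin 3) → Prop
  | hy : smithRel k q a (FreeAlgebra.ι k 1 * FreeAlgebra.ι k 0)
      (q • (FreeAlgebra.ι k 0 * FreeAlgebra.ι k 1))
  | xy : smithRel k q a (FreeAlgebra.ι k 2 * FreeAlgebra.ι k 0)
      (FreeAlgebra.ι k 0 * FreeAlgebra.ι k 2 +
        (Polynomial.aeval (q • FreeAlgebra.ι k 1) a -
          Polynomial.aeval (FreeAlgebra.ι k 1) a))
  | xh : smithRel k q a (FreeAlgebra.ι k 2 * FreeAlgebra.ι k 1)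
      (q • (FreeAlgebra.ι k 1 * FreeAlgebra.ι k 2))

/-- The Smith algebra `B` associated to `q` and `a`. -/
abbrev Smith (k : Type*) [CommRing k] (q : k) (a : Polynomial k) :=
  RingQuot (smithRel k q a)

/-- `Y ∈ B`. -/
noncomputable def Smith.Y (k : Type*) [CommRing k] (q : k) (a : Polynomial k) :
    Smith k q a :=
  RingQuot.mkAlgHom k (smithRel k q a) (FreeAlgebra.ι k 0)

/-- `H ∈ B`. -/
noncomputable def Smith.H (k : Type*) [CommRing k] (q : k) (a : Polynomial k) :
    Smith k q a :=
  RingQuot.mkAlgHom k (smithRel k q a) (FreeAlgebra.ι k 1)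

/-- `X ∈ B`. -/
noncomputable def Smith.X (k : Type*) [CommRing k] (q : k) (a : Polynomial k) :
    Smith k q a :=
  RingQuot.mkAlgHom k (smithRel k q a) (FreeAlgebra.ι k 2)

/-- `Ω = YX − a(H) ∈ B`. -/
noncomputable def Smith.Omega (k : Type*) [CommRing k] (q : k) (a : Polynomial k) :
    Smith k q a :=
  Smith.Y k q a * Smith.X k q a - Polynomial.aeval (Smith.H k q a) a

section Aux

variable (k : Type*) [CommRing k] (q : k) (a : Polynomial k)

local notation "f" => RingQuot.mkAlgHom k (smithRel k q a)

theorem Smith.rel_hy : Smith.H k q a * Smith.Y k q a = q • (Smith.Y k q a * Smith.H k q a) := by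
  have := RingQuot.mkAlgHom_rel k (smithRel.hy (k := k) (q := q) (a := a))
  simpa [map_mul, map_smul, Smith.Y, Smith.H] using this

theorem Smith.rel_xy : Smith.X k q a * Smith.Y k q a =
    Smith.Y k q a * Smith.X k q a +
      (aeval (q • Smith.H k q a) a - aeval (Smith.H k q a) a) := by
  have := RingQuot.mkAlgHom_rel k (smithRel.xy (k := k) (q := q) (a := a))
  simpa [map_mul, map_add, map_sub, map_smul, ← Polynomial.aeval_algHom_apply,
    Smith.Y, Smith.H, Smith.X] using this

theorem Smith.rel_xh : Smith.X k q a * Smith.H k q a = q • (Smith.H k q a * Smith.X k q a) := by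
  have := RingQuot.mkAlgHom_rel k (smithRel.xh (k := k) (q := q) (a := a))
  simpa [map_mul, map_smul, Smith.H, Smith.X] using this

theorem Smith.hpow_y (n : ℕ) :
    Smith.H k q a ^ n * Smith.Y k q a = Smith.Y k q a * (q • Smith.H k q a) ^ n := by
  induction n with
  | zero => simp
  | succ n ih =>
    rw [pow_succ, mul_assoc, Smith.rel_hy, mul_smul_comm, ← mul_assoc, ih, pow_succ,
      mul_smul_comm, mul_assoc, mul_smul_comm]

theorem Smith.x_hpow (n : ℕ) :
    Smith.X k q a * Smith.H k q a ^ n = (q • Smith.H k q a) ^ n * Smith.X k q a := by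
  induction n with
  | zero => simp
  | succ n ih =>
    rw [pow_succ, ← mul_assoc, ih, mul_assoc, Smith.rel_xh, mul_smul_comm, pow_succ,
      mul_assoc, smul_mul_assoc, mul_smul_comm]

theorem Smith.aeval_y (p : Polynomial k) :
    aeval (Smith.H k q a) p * Smith.Y k q a = Smith.Y k q a * aeval (q • Smith.H k q a) p := by
  induction p using Polynomial.induction_on' with
  | add p r hp hr => simp [map_add, add_mul, mul_add, hp, hr]
  | monomial n c =>
    rw [Polynomial.aeval_monomial, Polynomial.aeval_monomial, mul_assoc, Smith.hpow_y,
      ← mul_assoc, Algebra.commutes, mul_assoc]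

theorem Smith.x_aeval (p : Polynomial k) :
    Smith.X k q a * aeval (Smith.H k q a) p = aeval (q • Smith.H k q a) p * Smith.X k q a := by
  induction p using Polynomial.induction_on' with
  | add p r hp hr => simp [map_add, add_mul, mul_add, hp, hr]
  | monomial n c =>
    rw [Polynomial.aeval_monomial, Polynomial.aeval_monomial, ← mul_assoc, ← Algebra.commutes,
      mul_assoc, Smith.x_hpow, ← mul_assoc]

theorem Smith.aeval_h_comm (p : Polynomial k) :
    aeval (Smith.H k q a) p * Smith.H k q a = Smith.H k q a * aeval (Smith.H k q a) p := by
  induction p using Polynomial.induction_on' with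
  | add p r hp hr => simp [add_mul, mul_add, hp, hr]
  | monomial n c =>
    rw [Polynomial.aeval_monomial, mul_assoc, ← pow_succ, pow_succ', ← mul_assoc,
      Algebra.commutes, mul_assoc]

theorem Smith.omega_mul_h :
    Smith.Omega k q a * Smith.H k q a = Smith.H k q a * Smith.Omega k q a := by
  unfold Smith.Omega
  rw [sub_mul, mul_sub, mul_assoc, Smith.rel_xh, mul_smul_comm, ← mul_assoc, ← smul_mul_assoc,
    ← Smith.rel_hy, Smith.aeval_h_comm, mul_assoc]

theorem Smith.omega_mul_y :
    Smith.Omega k q a * Smith.Y k q a = Smith.Y k q a * Smith.Omega k q a := by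
  unfold Smith.Omega
  rw [sub_mul, mul_sub, mul_assoc, Smith.rel_xy, Smith.aeval_y, mul_add, mul_sub]
  abel

theorem Smith.omega_mul_x :
    Smith.Omega k q a * Smith.X k q a = Smith.X k q a * Smith.Omega k q a := by
  unfold Smith.Omega
  rw [sub_mul, mul_sub, ← mul_assoc, Smith.rel_xy, Smith.x_aeval, add_mul, sub_mul]
  abel

end Aux

/-- In the Smith algebra `B` with relations `HY = qYH`, `[X,Y] = a(qH) − a(H)`,
`XH = qHX`, the element `Ω = YX − a(H)` is central and equals `XY − a(qH)`. -/
theorem smith_omega_central (k : Type*) [Field k] [CharZero k] (q : k)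
    (hq0 : q ≠ 0) (hq1 : q ≠ 1) (a : k[X]) (hmonic : a.Monic)
    (hdeg : 1 < a.natDegree) :
    (∀ b : Smith k q a, Smith.Omega k q a * b = b * Smith.Omega k q a) ∧
      Smith.Omega k q a =
        Smith.X k q a * Smith.Y k q a - aeval (q • Smith.H k q a) a := by
  constructor
  · intro b
    obtain ⟨x, rfl⟩ := RingQuot.mkAlgHom_surjective k (smithRel k q a) b
    induction x using FreeAlgebra.induction with
    | grade0 r =>
      rw [AlgHom.commutes]
      exact (Algebra.commutes r _).symm
    | grade1 i =>
      fin_cases i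
      · exact Smith.omega_mul_y k q a
      · exact Smith.omega_mul_h k q a
      · exact Smith.omega_mul_x k q a
    | mul x y hx hy =>
      rw [map_mul, ← mul_assoc, hx, mul_assoc, hy, mul_assoc]
    | add x y hx hy =>
      rw [map_add, mul_add, add_mul, hx, hy]
  · rw [Smith.rel_xy]
    unfold Smith.Omega
    abel
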